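/- Let G be a connected finite simple graph of order n ≥ 5 and let F(n) = C(n−2,2) + 2 if n ≥ 5 and n ∉ {6,8}, F(6) = 9, F(8) = 18. If the number of edges of G satisfies |E(G)| > F(n), then for every subset S ⊆ V(G) the number of isolated vertices of G − S satisfies i(G−S) ≤ (3/2)|S| (equivalently, G has a {P₂,C₃,P₅,𝒯(3)}-factor). -/

import Mathlib

open Finset

/-- The join `G ∨g H` of two graphs: the disjoint union together with all edges
between the two parts. -/
def SimpleGraph.gjoin {α β : Type*} (G : SimpleGraph α) (H : SimpleGraph β) :
    SimpleGraph (α ⊕ β) where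
  Adj u v := match u, v with
    | Sum.inl u, Sum.inl v => G.Adj u v
    | Sum.inr u, Sum.inr v => H.Adj u v
    | _, _ => True
  symm := ⟨fun u v => match u, v with
    | Sum.inl u, Sum.inl v => G.adj_symm
    | Sum.inr u, Sum.inr v => H.adj_symm
    | Sum.inl _, Sum.inr _ | Sum.inr _, Sum.inl _ => fun _ => trivial⟩
  loopless := ⟨fun u => by cases u <;> simp⟩

infixl:60 " ∨g " => SimpleGraph.gjoin

/-- The `A_α`-matrix `α • D(G) + (1-α) • A(G)` of a graph `G`. -/
noncomputable def aAlphaMatrix {V : Type*} [Fintype V] [DecidableEq V]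
    (α : ℝ) (G : SimpleGraph V) : Matrix V V ℝ := by
  classical
  exact α • Matrix.diagonal (fun v => (G.degree v : ℝ)) + (1 - α) • G.adjMatrix ℝ

/-- The `A_α`-spectral radius `ρ_α(G)`: the largest eigenvalue of `A_α(G)`. -/
noncomputable def rhoAlpha {V : Type*} [Fintype V] [DecidableEq V]
    (α : ℝ) (G : SimpleGraph V) : ℝ :=
  sSup (spectrum ℝ (aAlphaMatrix α G))

/-- The signless Laplacian matrix `Q(G) = D(G) + A(G)`. -/
noncomputable def signlessLaplacian {V : Type*} [Fintype V] [DecidableEq V]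
    (G : SimpleGraph V) : Matrix V V ℝ := by
  classical
  exact Matrix.diagonal (fun v => (G.degree v : ℝ)) + G.adjMatrix ℝ

/-- `q(G)`: the largest eigenvalue of the signless Laplacian matrix of `G`. -/
noncomputable def qIndex {V : Type*} [Fintype V] [DecidableEq V]
    (G : SimpleGraph V) : ℝ :=
  sSup (spectrum ℝ (signlessLaplacian G))

/-- The number of edges (the size) of a graph. -/
noncomputable def edgeCount {V : Type*} [Fintype V] [DecidableEq V]
    (G : SimpleGraph V) : ℕ := by
  classical
  exact G.edgeFinset.card

/-- `i(G - S)`: the number of isolated vertices of the graph obtained from `G`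
by deleting the vertices of `S` together with all edges incident to `S`. -/
noncomputable def isolGminus {V : Type*} [Fintype V] [DecidableEq V]
    (G : SimpleGraph V) (S : Finset V) : ℕ := by
  classical
  exact (Finset.univ.filter (fun v => v ∉ S ∧ ∀ u, G.Adj v u → u ∈ S)).card

/-- `F(n)`: the edge bound from Theorem 1.1. -/
def Fbound (n : ℕ) : ℕ :=
  if n = 6 then 9 else if n = 8 then 18 else (n - 2).choose 2 + 2

/-- `f(α)`: the order bound from Theorem 1.2. -/
noncomputable def fAlpha (α : ℝ) : ℝ :=
  if α ≤ 1 / 2 then 20 else if α ≤ 5 / 7 then 25 else 7 / (1 - α) + 3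

lemma key (n i s : ℕ) (hn : 5 ≤ n) (hs : 1 ≤ s) (h1 : 3*s+1 ≤ 2*i) (h2 : i+s ≤ n) :
    (n-i)*(n-i-1) + 2*(i*s) ≤ 2 * Fbound n := by
  rcases le_or_gt n 9 with h9 | h9
  · have hi : i ≤ 9 := by omega
    interval_cases n <;> interval_cases i <;> norm_num [Fbound, Nat.choose] <;> omega
  · have hch : (n-2).choose 2 * 2 = (n-2)*(n-3) := by
      rw [Nat.choose_two_right, Nat.div_mul_cancel (Nat.even_mul_pred_self _).two_dvd, Nat.sub_sub]
    have hF : 2 * Fbound n = (n-2)*(n-3) + 4 := by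
      simp only [Fbound, if_neg (by omega : n ≠ 6), if_neg (by omega : n ≠ 8)]
      omega
    rw [hF]
    have hcast : ∀ N M S : ℤ, 10 ≤ N → 1 ≤ S → S ≤ M → 3*S+1 ≤ 2*(N-M) →
        M*(M-1) + 2*(N-M)*S ≤ (N-2)*(N-3) + 4 := by
      intro N M S hN hS hSM h1'
      rcases le_or_gt (5*M) (2*N-1) with hA | hB
      · nlinarith [mul_nonneg (by linarith : (0:ℤ) ≤ M - 1) (by linarith : (0:ℤ) ≤ 2*N - 1 - 5*M),
          mul_nonneg (by linarith : (0:ℤ) ≤ N - M) (by linarith : (0:ℤ) ≤ M - S),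
          sq_nonneg (2*N - 5*M), sq_nonneg (N - M - S)]
      · nlinarith [mul_nonneg (by linarith : (0:ℤ) ≤ N - M - 2) (by linarith : (0:ℤ) ≤ 5*M - 2*N),
          mul_nonneg (by linarith : (0:ℤ) ≤ N - M) (by linarith : (0:ℤ) ≤ 2*(N-M) - 1 - 3*S),
          sq_nonneg (2*N - 5*M), sq_nonneg (N - 10)]
    have hi_n : i ≤ n := by omega
    zify [hi_n, (by omega : 1 ≤ n - i), (by omega : 2 ≤ n), (by omega : 3 ≤ n)]
    have := hcast n ((n:ℤ) - i) s (by omega) (by exact_mod_cast hs)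
      (by push_cast; omega) (by push_cast; omega)
    linarith [this]


theorem size_condition_factor {V : Type*} [Fintype V] [DecidableEq V]
    (G : SimpleGraph V) (hconn : G.Connected) (n : ℕ) (hcard : Fintype.card V = n)
    (hn : 5 ≤ n) (hsize : Fbound n < edgeCount G) :
    ∀ S : Finset V, (isolGminus G S : ℝ) ≤ 3 / 2 * S.card := by
  classical
  intro S
  by_contra hcon
  push_neg at hcon
  set I : Finset V := univ.filter (fun v => v ∉ S ∧ ∀ u, G.Adj v u → u ∈ S) with hI
  have hisol : isolGminus G S = I.card := by
    unfold isolGminus; rw [hI]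
  have hmemI : ∀ v : V, v ∈ I ↔ (v ∉ S ∧ ∀ u, G.Adj v u → u ∈ S) := by
    intro v; rw [hI]; simp
  rw [hisol] at hcon
  have hgt : 3 * S.card + 1 ≤ 2 * I.card := by
    have h2 : (3 * S.card : ℝ) < 2 * I.card := by linarith
    have : 3 * S.card < 2 * I.card := by exact_mod_cast h2
    omega
  have hnoiso : ∀ v : V, ∃ u, G.Adj v u := by
    intro v
    obtain ⟨u, hu⟩ : ∃ u : V, u ≠ v := Fintype.exists_ne_of_one_lt_card (by omega) v
    obtain ⟨w⟩ := hconn.preconnected v u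
    cases w with
    | nil => exact absurd rfl hu
    | cons h _ => exact ⟨_, h⟩
  have hs1 : 1 ≤ S.card := by
    rcases Nat.eq_zero_or_pos S.card with h0 | h0
    · exfalso
      have hSempty : S = ∅ := Finset.card_eq_zero.mp h0
      have hIpos : 0 < I.card := by omega
      obtain ⟨v, hv⟩ := Finset.card_pos.mp hIpos
      obtain ⟨u, hu⟩ := hnoiso v
      have := ((hmemI v).mp hv).2 u hu
      simp [hSempty] at this
    · exact h0
  have hdisj : Disjoint I S := by
    rw [Finset.disjoint_left]
    intro v hv hvS
    exact ((hmemI v).mp hv).1 hvS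
  have hIS : I.card + S.card ≤ n := by
    rw [← Finset.card_union_of_disjoint hdisj, ← hcard]
    exact Finset.card_le_univ _
  -- edge bound
  have hedge : 2 * edgeCount G ≤ (n - I.card) * (n - I.card - 1) + 2 * (I.card * S.card) := by
    have hec : 2 * edgeCount G = #(univ.filter fun (x, y) ↦ G.Adj x y) := by
      have h1 : edgeCount G = #G.edgeFinset := by unfold edgeCount; congr!
      rw [h1, SimpleGraph.two_mul_card_edgeFinset]
    rw [hec]
    have hsub : (univ.filter fun (x, y) ↦ G.Adj x y) ⊆
        (Iᶜ.offDiag ∪ I ×ˢ S) ∪ S ×ˢ I := by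
      rintro ⟨u, v⟩ hp
      simp only [Finset.mem_filter, Finset.mem_univ, true_and] at hp
      simp only [Finset.mem_union, Finset.mem_offDiag, Finset.mem_product, Finset.mem_compl]
      by_cases hu : u ∈ I
      · exact Or.inl (Or.inr ⟨hu, ((hmemI u).mp hu).2 v hp⟩)
      · by_cases hv : v ∈ I
        · exact Or.inr ⟨((hmemI v).mp hv).2 u hp.symm, hv⟩
        · exact Or.inl (Or.inl ⟨hu, hv, hp.ne⟩)
    calc #(univ.filter fun (x, y) ↦ G.Adj x y)
        ≤ #((Iᶜ.offDiag ∪ I ×ˢ S) ∪ S ×ˢ I) := Finset.card_le_card hsub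
      _ ≤ #(Iᶜ.offDiag ∪ I ×ˢ S) + #(S ×ˢ I) := Finset.card_union_le _ _
      _ ≤ #(Iᶜ.offDiag) + #(I ×ˢ S) + #(S ×ˢ I) :=
          Nat.add_le_add_right (Finset.card_union_le _ _) _
      _ = (#Iᶜ * #Iᶜ - #Iᶜ) + I.card * S.card + S.card * I.card := by
          rw [Finset.offDiag_card, Finset.card_product, Finset.card_product]
      _ ≤ (n - I.card) * (n - I.card - 1) + 2 * (I.card * S.card) := by
          rw [Finset.card_compl, hcard]
          have hm : (n - I.card) * (n - I.card - 1)
              = (n - I.card) * (n - I.card) - (n - I.card) := by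
            cases h : n - I.card <;> simp [Nat.succ_sub_one, Nat.mul_succ]
          rw [hm, Nat.mul_comm S.card I.card]
          omega
  have hkey := key n I.card S.card hn hs1 hgt (by omega)
  have hfin : 2 * edgeCount G ≤ 2 * Fbound n := le_trans hedge hkey
  omega
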